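/- Let K be a Euclidean cubical complex in ℝⁿ, let σ be a cube of K, and let τ, v be vertices of σ with τ ⪯ v, v ≠ τ, and τ ≠ min σ. Suppose τ is a free face of σ and let K' be the (τ, σ)-collapse of K. Then: (a) v − τ and v − min σ belong to pastlk(K, v), and every j ∈ pastlk(K, v) with v − τ ⪯ j satisfies j ⪯ v − min σ (so v − τ is a free face of the simplicial complex pastlk(K, v) whose unique maximal proper coface is v − min σ); and (b) pastlk(K', v) = pastlk(K, v) ∖ { j ∈ {0,1}ⁿ ∖ {0} : v − τ ⪯ j ⪯ v − min σ }, i.e., pastlk(K', v) is the (v − τ)-collapse of pastlk(K, v) in the simplicial setting. -/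

import Mathlib

open Set

namespace DCC

/-- The real point corresponding to an integer point of `ℤⁿ`. -/
def toR {n : ℕ} (v : Fin n → ℤ) : Fin n → ℝ := fun i => (v i : ℝ)

/-- `j ∈ {0,1}ⁿ`: every coordinate of `j` is `0` or `1`. -/
def IsBinary {n : ℕ} (j : Fin n → ℤ) : Prop := ∀ i, j i = 0 ∨ j i = 1

/-- The elementary cube `[v - j, v] = {x : v - j ⪯ x ⪯ v}` in `ℝⁿ`. -/
def cube {n : ℕ} (v j : Fin n → ℤ) : Set (Fin n → ℝ) := Set.Icc (toR (v - j)) (toR v)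

/-- A subset of `ℝⁿ` which is an elementary cube. -/
def IsElemCube {n : ℕ} (σ : Set (Fin n → ℝ)) : Prop := ∃ v j, IsBinary j ∧ σ = cube v j

/-- A Euclidean cubical complex: a finite union of elementary cubes. -/
def IsComplex {n : ℕ} (K : Set (Fin n → ℝ)) : Prop :=
  ∃ C : Finset ((Fin n → ℤ) × (Fin n → ℤ)),
    (∀ c ∈ C, IsBinary c.2) ∧ K = ⋃ c ∈ C, cube c.1 c.2

/-- The past link of `v` in `K`: all nonzero binary `j` with `[v - j, v] ⊆ K`. -/
def pastlk {n : ℕ} (K : Set (Fin n → ℝ)) (v : Fin n → ℤ) : Set (Fin n → ℤ) :=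
  {j | IsBinary j ∧ j ≠ 0 ∧ cube v j ⊆ K}

/-- A maximal cube of `K`: a cube of `K` not properly contained in another cube of `K`. -/
def IsMaximalCube {n : ℕ} (K σ : Set (Fin n → ℝ)) : Prop :=
  IsElemCube σ ∧ σ ⊆ K ∧ ∀ γ, IsElemCube γ → γ ⊆ K → σ ⊆ γ → γ = σ

/-- `τ` is a free face of the maximal cube `σ` in `K`: `τ` is a proper face of `σ` and
`σ` is the unique maximal cube of `K` containing `τ`. -/
def IsFreeFace {n : ℕ} (K τ σ : Set (Fin n → ℝ)) : Prop :=
  IsElemCube τ ∧ τ ⊂ σ ∧ IsMaximalCube K σ ∧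
    ∀ γ, IsMaximalCube K γ → τ ⊆ γ → γ = σ

/-- The `(τ, σ)`-collapse of `K`: the union of all cubes of `K` that do not contain `τ`. -/
def collapse {n : ℕ} (K τ : Set (Fin n → ℝ)) : Set (Fin n → ℝ) :=
  ⋃₀ {γ | IsElemCube γ ∧ γ ⊆ K ∧ ¬ τ ⊆ γ}

/-- The restriction `K|_σ` where `σ` has minimum vertex `a` and maximum vertex `b`:
the union of all cubes `γ` of `K` with `a ⪯ min γ` and `max γ ⪯ b`. -/
def restrict {n : ℕ} (K : Set (Fin n → ℝ)) (a b : Fin n → ℤ) : Set (Fin n → ℝ) :=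
  ⋃₀ {γ | ∃ v j, IsBinary j ∧ γ = cube v j ∧ cube v j ⊆ K ∧ a ≤ v - j ∧ v ≤ b}

/-- The geometric realization of the past link of `v` in `K`, as a subset of `ℝⁿ`:
the union over `j ∈ pastlk K v` of the convex hulls of `{v - eᵢ : jᵢ = 1}`. -/
def geomReal {n : ℕ} (K : Set (Fin n → ℝ)) (v : Fin n → ℤ) : Set (Fin n → ℝ) :=
  ⋃ j ∈ pastlk K v, convexHull ℝ ((fun i => toR v - Pi.single i (1 : ℝ)) '' {i | j i = 1})

/-- The space of dipaths in `K` from `p` to `q`, as a subspace of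
`C([0,1], ℝⁿ)` with the compact-open topology. -/
def DipathSpace {n : ℕ} (K : Set (Fin n → ℝ)) (p q : Fin n → ℝ) :
    Set C(unitInterval, Fin n → ℝ) :=
  {γ | (∀ t, γ t ∈ K) ∧ γ 0 = p ∧ γ 1 = q ∧ Monotone ⇑γ}

/-- The reachable complex `R(K, p)`: points of `K` reachable from `p` by a dipath in `K`. -/
def reach {n : ℕ} (K : Set (Fin n → ℝ)) (p : Fin n → ℝ) : Set (Fin n → ℝ) :=
  {q ∈ K | (DipathSpace K p q).Nonempty}

/-- `(τ, σ)` is an LPDC pair in `K` (where `K'` is the `(τ,σ)`-collapse of `K`):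
for every vertex `v` of `K'`, the geometric realizations of the past links of `v`
in `K` and in `K'` are homotopy equivalent. -/
def IsLPDCPair {n : ℕ} (K τ : Set (Fin n → ℝ)) : Prop :=
  ∀ v : Fin n → ℤ, toR v ∈ collapse K τ →
    Nonempty (ContinuousMap.HomotopyEquiv ↥(geomReal K v) ↥(geomReal (collapse K τ) v))



lemma toR_le {n : ℕ} {a b : Fin n → ℤ} : toR a ≤ toR b ↔ a ≤ b := by
  simp [toR, Pi.le_def]

lemma toR_mem_cube {n : ℕ} {a v j : Fin n → ℤ} :
    toR a ∈ cube v j ↔ v - j ≤ a ∧ a ≤ v := by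
  simp [cube, Set.mem_Icc, toR_le]

lemma binary_nonneg {n : ℕ} {j : Fin n → ℤ} (h : IsBinary j) : 0 ≤ j := by
  intro i; rcases h i with h | h <;> simp [h]

lemma binary_le_one {n : ℕ} {j : Fin n → ℤ} (h : IsBinary j) : j ≤ 1 := by
  intro i; rcases h i with h | h <;> simp [h]

lemma cube_point {n : ℕ} (τ : Fin n → ℤ) : cube τ 0 = {toR τ} := by
  simp [cube, Set.Icc_self]

lemma point_subset_iff {n : ℕ} {τ : Fin n → ℤ} {γ : Set (Fin n → ℝ)} :
    cube τ 0 ⊆ γ ↔ toR τ ∈ γ := by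
  rw [cube_point, Set.singleton_subset_iff]

lemma cube_subset_iff {n : ℕ} {v j w k : Fin n → ℤ} (hj : 0 ≤ j) :
    cube v j ⊆ cube w k ↔ w - k ≤ v - j ∧ v ≤ w := by
  rw [cube, cube, Set.Icc_subset_Icc_iff (toR_le.mpr (sub_le_self v hj))]
  simp [toR_le]

lemma exists_maximal_cube {n : ℕ} {K : Set (Fin n → ℝ)} {w k : Fin n → ℤ}
    (hk : IsBinary k) (hsub : cube w k ⊆ K) :
    ∃ μ, IsMaximalCube K μ ∧ cube w k ⊆ μ := by
  set S : Set (Set (Fin n → ℝ)) := {δ | IsElemCube δ ∧ δ ⊆ K ∧ cube w k ⊆ δ} with hS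
  have hfin : S.Finite := by
    have hsub2 : S ⊆ (fun p : (Fin n → ℤ) × (Fin n → ℤ) => cube p.1 p.2) ''
        (Set.Icc w (w - k + 1) ×ˢ Set.Icc 0 1) := by
      rintro δ ⟨⟨u, l, hl, rfl⟩, hδK, hγδ⟩
      rw [cube_subset_iff (binary_nonneg hk)] at hγδ
      refine ⟨(u, l), ⟨⟨hγδ.2, ?_⟩, binary_nonneg hl, binary_le_one hl⟩, rfl⟩
      intro i
      have h1 : u i - l i ≤ w i - k i := hγδ.1 i
      have h2 : l i ≤ 1 := binary_le_one hl i
      simp only [Pi.sub_apply, Pi.add_apply, Pi.one_apply]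
      omega
    exact (((Set.finite_Icc _ _).prod (Set.finite_Icc _ _)).image _).subset hsub2
  have hne : S.Nonempty := ⟨cube w k, ⟨w, k, hk, rfl⟩, hsub, subset_rfl⟩
  obtain ⟨μ, hμS, hmax⟩ := hfin.exists_maximalFor id S hne
  refine ⟨μ, ⟨hμS.1, hμS.2.1, ?_⟩, hμS.2.2⟩
  intro γ hγe hγK hμγ
  exact Set.Subset.antisymm (hmax (j := γ) ⟨hγe, hγK, hμS.2.2.trans hμγ⟩ hμγ) hμγ

theorem statement11 (n : ℕ) (hn : 0 < n) (K : Set (Fin n → ℝ)) (hK : IsComplex K)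
    (vσ jσ : Fin n → ℤ) (hjσ : IsBinary jσ) (hσK : cube vσ jσ ⊆ K)
    (τ v : Fin n → ℤ)
    (hτ1 : vσ - jσ ≤ τ) (hτ2 : τ ≤ vσ)
    (hv1 : vσ - jσ ≤ v) (hv2 : v ≤ vσ)
    (hτv : τ ≤ v) (hvτ : v ≠ τ) (hτmin : τ ≠ vσ - jσ)
    (hfree : IsFreeFace K (cube τ 0) (cube vσ jσ)) :
    ((v - τ) ∈ pastlk K v ∧ (v - (vσ - jσ)) ∈ pastlk K v ∧
      (∀ j ∈ pastlk K v, v - τ ≤ j → j ≤ v - (vσ - jσ))) ∧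
    pastlk (collapse K (cube τ 0)) v
      = pastlk K v \
          {j | IsBinary j ∧ j ≠ 0 ∧ v - τ ≤ j ∧ j ≤ v - (vσ - jσ)} := by
  have hjσ0 : (0:Fin _ → ℤ) ≤ jσ := binary_nonneg hjσ
  -- key: any cube of K whose min is ≤ τ (and max ≥ v ≥ τ) lies in σ
  have key : ∀ j : Fin n → ℤ, IsBinary j → cube v j ⊆ K → v - j ≤ τ →
      cube v j ⊆ cube vσ jσ := by
    intro j hjb hjK hle
    obtain ⟨μ, hμ, hsubμ⟩ := exists_maximal_cube hjb hjK
    have hτμ : cube τ 0 ⊆ μ :=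
      point_subset_iff.mpr (hsubμ (toR_mem_cube.mpr ⟨hle, hτv⟩))
    have := hfree.2.2.2 μ hμ hτμ
    rw [← this]; exact hsubμ
  have hbvτ : IsBinary (v - τ) := by
    intro i
    have h1 : vσ i - jσ i ≤ τ i := hτ1 i
    have h2 : τ i ≤ v i := hτv i
    have h3 : v i ≤ vσ i := hv2 i
    have h4 := hjσ i
    simp only [Pi.sub_apply]
    omega
  have hbvm : IsBinary (v - (vσ - jσ)) := by
    intro i
    have h1 : vσ i - jσ i ≤ v i := hv1 i
    have h3 : v i ≤ vσ i := hv2 i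
    have h4 := hjσ i
    simp only [Pi.sub_apply]
    omega
  have ha1 : (v - τ) ∈ pastlk K v := by
    refine ⟨hbvτ, sub_ne_zero_of_ne hvτ, subset_trans ?_ hσK⟩
    rw [cube_subset_iff (sub_nonneg.mpr hτv)]
    simpa using And.intro hτ1 hv2
  have ha2 : (v - (vσ - jσ)) ∈ pastlk K v := by
    have hne : v - (vσ - jσ) ≠ 0 := by
      intro h
      exact hτmin (le_antisymm (hτv.trans_eq (sub_eq_zero.mp h)) hτ1)
    refine ⟨hbvm, hne, subset_trans ?_ hσK⟩
    rw [cube_subset_iff (sub_nonneg.mpr hv1)]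
    simpa using hv2
  have ha3 : ∀ j ∈ pastlk K v, v - τ ≤ j → j ≤ v - (vσ - jσ) := by
    rintro j ⟨hjb, hj0, hjK⟩ hle
    have hsub := key j hjb hjK (sub_le_comm.mp hle)
    rw [cube_subset_iff (binary_nonneg hjb)] at hsub
    intro i
    have h : vσ i - jσ i ≤ v i - j i := hsub.1 i
    simp only [Pi.sub_apply]
    omega
  refine ⟨⟨ha1, ha2, ha3⟩, ?_⟩
  have hK'K : collapse K (cube τ 0) ⊆ K :=
    Set.sUnion_subset fun γ hγ => hγ.2.1
  have hτK' : toR τ ∉ collapse K (cube τ 0) := by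
    rintro ⟨γ, ⟨he, hK, hns⟩, hmem⟩
    exact hns (point_subset_iff.mpr hmem)
  ext j
  simp only [pastlk, Set.mem_setOf_eq, Set.mem_diff]
  constructor
  · rintro ⟨hjb, hj0, hjK'⟩
    refine ⟨⟨hjb, hj0, hjK'.trans hK'K⟩, ?_⟩
    rintro ⟨-, -, hle, -⟩
    exact hτK' (hjK' (toR_mem_cube.mpr ⟨sub_le_comm.mp hle, hτv⟩))
  · rintro ⟨⟨hjb, hj0, hjK⟩, hnot⟩
    have hnle : ¬ v - τ ≤ j := by
      intro hle
      exact hnot ⟨hjb, hj0, hle, ha3 j ⟨hjb, hj0, hjK⟩ hle⟩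
    obtain ⟨i, hi⟩ := not_forall.mp hnle
    push_neg at hi
    refine ⟨hjb, hj0, ?_⟩
    refine Set.subset_sUnion_of_mem ⟨⟨v, j, hjb, rfl⟩, hjK, ?_⟩
    intro hc
    have h2 : v i - j i ≤ τ i := (toR_mem_cube.mp (point_subset_iff.mp hc)).1 i
    have h3 : j i < v i - τ i := hi
    omega


end DCC
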